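/- Let n ≥ 4 and let A ⊆ F₃(n) be an antichain with respect to ⪯ (i.e. any two distinct elements of A are ⪯-incomparable). Then any two distinct elements of A have gaps differing by at least 2, and consequently the cardinality of A is at most ⌈(n−3)/2⌉. -/
import Mathlib


/-- The 4-element set `{i, i+1, j, j+1}`, denoted `(i,j)` in the paper. -/
def pairSet (i j : ℕ) : Finset ℕ := {i, i + 1, j, j + 1}

/-- Membership in the collection `F₃(n)` of 4-element subsets of `{1,…,n}`
of the form `{i, i+1, j, j+1}` with `1 ≤ i`, `i+2 ≤ j`, `j+1 ≤ n`. -/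
def memF3 (n : ℕ) (f : Finset ℕ) : Prop :=
  ∃ i j : ℕ, 1 ≤ i ∧ i + 2 ≤ j ∧ j + 1 ≤ n ∧ f = pairSet i j

/-- The partial order `⪯` on finite subsets of `ℕ` of equal cardinality:
componentwise comparison of the increasingly sorted lists of elements. -/
def squeezedLE (f g : Finset ℕ) : Prop :=
  List.Forall₂ (· ≤ ·) (f.sort (· ≤ ·)) (g.sort (· ≤ ·))

/-- `I` is an order ideal of `F₃(n)` w.r.t. `⪯`. -/
def IsIdealF3 (n : ℕ) (I : Set (Finset ℕ)) : Prop :=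
  (∀ f ∈ I, memF3 n f) ∧
  ∀ f g : Finset ℕ, memF3 n f → g ∈ I → squeezedLE f g → f ∈ I

/-- `max ⋃ I`, the largest vertex used by the collection `I`. -/
noncomputable def maxVertex (I : Set (Finset ℕ)) : ℕ :=
  sSup (⋃ f ∈ I, (f : Set ℕ))

/-- `0 * K = {{0} ∪ f : f ∈ K}`. -/
def coneZero (K : Set (Finset ℕ)) : Set (Finset ℕ) := (insert 0) '' K

/-- A facet of the squeezed sphere `S(I)`: a 4-element set contained in
exactly one member of `I`. -/
def isFacetOfS (I : Set (Finset ℕ)) (F : Finset ℕ) : Prop :=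
  F.card = 4 ∧ ∃! g, g ∈ I ∧ F ⊆ g

/-- The gap of `(i,j) = {i, i+1, j, j+1}`, i.e. `j - i - 2`. -/
def gapOf (f : Finset ℕ) : ℕ :=
  f.sup id - (f.sort (· ≤ ·)).headI - 3


lemma pairSet_eq_toFinset (i j : ℕ) : pairSet i j = [i, i+1, j, j+1].toFinset := by
  ext x; simp [pairSet]

lemma sort_pairSet {i j : ℕ} (h : i + 2 ≤ j) :
    (pairSet i j).sort (· ≤ ·) = [i, i+1, j, j+1] := by
  rw [pairSet_eq_toFinset]
  rw [List.toFinset_sort]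
  · simp [List.Pairwise]; omega
  · simp; omega

lemma gapOf_pairSet {i j : ℕ} (h : i + 2 ≤ j) :
    gapOf (pairSet i j) = j - i - 2 := by
  have hs : (pairSet i j).sup id = j + 1 := by
    simp [pairSet]; omega
  rw [gapOf, hs, sort_pairSet h]
  simp; omega

lemma squeezedLE_iff {i j i' j' : ℕ} (h : i + 2 ≤ j) (h' : i' + 2 ≤ j') :
    squeezedLE (pairSet i j) (pairSet i' j') ↔ (i ≤ i' ∧ j ≤ j') := by
  rw [squeezedLE, sort_pairSet h, sort_pairSet h']
  constructor
  · intro hf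
    rcases hf with _ | ⟨h1, _ | ⟨h2, _ | ⟨h3, _⟩⟩⟩
    omega
  · intro ⟨h1, h2⟩
    exact List.Forall₂.cons h1 (List.Forall₂.cons (by omega) (List.Forall₂.cons h2
      (List.Forall₂.cons (by omega) List.Forall₂.nil)))

/-- In a `⪯`-antichain `A ⊆ F₃(n)`, any two distinct elements have gaps
differing by at least 2, and hence `#A ≤ ⌈(n-3)/2⌉`. -/
theorem antichain_gap_and_size (n : ℕ) (hn : 4 ≤ n) (A : Set (Finset ℕ))
    (hA : ∀ f ∈ A, memF3 n f)
    (hanti : ∀ f ∈ A, ∀ g ∈ A, f ≠ g → ¬ squeezedLE f g) :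
    (∀ f ∈ A, ∀ g ∈ A, f ≠ g →
      gapOf f + 2 ≤ gapOf g ∨ gapOf g + 2 ≤ gapOf f) ∧
    A.ncard ≤ (n - 3 + 1) / 2 := by
  have key : ∀ f ∈ A, ∀ g ∈ A, f ≠ g →
      gapOf f + 2 ≤ gapOf g ∨ gapOf g + 2 ≤ gapOf f := by
    intro f hf g hg hne
    obtain ⟨i, j, hi1, hij, hjn, rfl⟩ := hA f hf
    obtain ⟨i', j', hi1', hij', hjn', rfl⟩ := hA g hg
    have h1 := hanti _ hf _ hg hne
    have h2 := hanti _ hg _ hf (Ne.symm hne)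
    rw [squeezedLE_iff hij hij'] at h1
    rw [squeezedLE_iff hij' hij] at h2
    rw [gapOf_pairSet hij, gapOf_pairSet hij']
    omega
  refine ⟨key, ?_⟩
  have hmap : ∀ f ∈ A, gapOf f / 2 < (n - 4) / 2 + 1 := by
    intro f hf
    obtain ⟨i, j, hi1, hij, hjn, rfl⟩ := hA f hf
    rw [gapOf_pairSet hij]
    omega
  have hinj : Set.InjOn (fun f => gapOf f / 2) A := by
    intro f hf g hg heq
    by_contra hne
    dsimp at heq
    rcases key f hf g hg hne with h | h <;> omega
  have hsub : (fun f => gapOf f / 2) '' A ⊆ ↑(Finset.range ((n - 4) / 2 + 1)) := by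
    rintro x ⟨f, hf, rfl⟩
    simp only [Finset.coe_range, Set.mem_Iio]
    exact hmap f hf
  calc A.ncard = ((fun f => gapOf f / 2) '' A).ncard :=
        (Set.ncard_image_of_injOn hinj).symm
    _ ≤ (↑(Finset.range ((n - 4) / 2 + 1)) : Set ℕ).ncard :=
        Set.ncard_le_ncard hsub (Finset.range _).finite_toSet
    _ = (n - 4) / 2 + 1 := by rw [Set.ncard_coe_finset, Finset.card_range]
    _ ≤ (n - 3 + 1) / 2 := by omega
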